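/- Let 0 < s < 1 and 1 < p < ∞. An open set ∅ ≠ G ⊊ ℝⁿ admits an (s,p)-Hardy inequality if and only if there is a constant C > 0 such that ∫_K dist(x,∂G)^{−sp} dx ≤ C · cap_{s,p}(K,G) for every compact set K ⊂ G. -/

import Mathlib

open MeasureTheory Metric
open scoped ENNReal

/-- The `p`-th power of the fractional Sobolev seminorm,
`∫_G ∫_G |f x − f y|^p / |x − y|^{n + s p} dy dx`. -/
noncomputable def fracEnergy {n : ℕ} (G : Set (EuclideanSpace ℝ (Fin n))) (s p : ℝ)
    (f : EuclideanSpace ℝ (Fin n) → ℝ) : ℝ≥0∞ :=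
  ∫⁻ x in G, ∫⁻ y in G, ENNReal.ofReal (|f x - f y| ^ p / dist x y ^ ((n : ℝ) + s * p))

/-- `G` admits an `(s,p)`-Hardy inequality: there is `C > 0` with
`∫_G |f(x)|^p dist(x,∂G)^{-sp} dx ≤ C ∫_G ∫_G |f(x) − f(y)|^p / |x−y|^{n+sp} dy dx`
for all `f ∈ C_c(G)`. -/
def AdmitsHardy {n : ℕ} (G : Set (EuclideanSpace ℝ (Fin n))) (s p : ℝ) : Prop :=
  ∃ C : ℝ, 0 < C ∧
    ∀ f : EuclideanSpace ℝ (Fin n) → ℝ,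
      Continuous f → HasCompactSupport f → tsupport f ⊆ G →
      (∫⁻ x in G,
          ENNReal.ofReal (|f x| ^ p * Metric.infDist x (frontier G) ^ (-(s * p)))) ≤
        ENNReal.ofReal C * fracEnergy G s p f

/-- The fractional `(s,p)`-capacity
`cap_{s,p}(K,G) = inf { |u|_{W^{s,p}(G)}^p : u ∈ C_c(G), u ≥ 1 on K }`. -/
noncomputable def fracCapacity {n : ℕ} (G : Set (EuclideanSpace ℝ (Fin n))) (s p : ℝ)
    (K : Set (EuclideanSpace ℝ (Fin n))) : ℝ≥0∞ :=
  ⨅ u : {u : EuclideanSpace ℝ (Fin n) → ℝ //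
      Continuous u ∧ HasCompactSupport u ∧ tsupport u ⊆ G ∧ ∀ x ∈ K, 1 ≤ u x},
    fracEnergy G s p u

/-! ### Auxiliary elementary lemmas -/

private lemma minsub_mono {a b c c' : ℝ} (hba : b ≤ a) (hcc : c' ≤ c) :
    min a c' - min b c' ≤ min a c - min b c := by
  simp only [min_def]; split_ifs <;> linarith

private lemma min_sub_min_le {a b c : ℝ} (hba : b ≤ a) : min a c - min b c ≤ a - b := by
  simp only [min_def]; split_ifs <;> linarith

private lemma sum_Icc_telescope_nat (φ : ℤ → ℝ) (m : ℤ) (N : ℕ) :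
    ∑ j ∈ Finset.Icc m (m + N), (φ j - φ (j - 1)) = φ (m + N) - φ (m - 1) := by
  induction N with
  | zero => simp
  | succ N ih =>
    have hins : Finset.Icc m (m + (N + 1 : ℕ)) =
        insert (m + N + 1) (Finset.Icc m (m + N)) := by
      ext j; simp only [Finset.mem_Icc, Finset.mem_insert]; omega
    rw [hins, Finset.sum_insert (by simp only [Finset.mem_Icc]; omega), ih]
    have h1 : m + N + 1 - 1 = m + N := by ring
    have h2 : m + ((N : ℤ) + 1) = m + N + 1 := by ring
    rw [h1]
    push_cast
    rw [h2]
    ring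

private lemma sum_Icc_telescope (φ : ℤ → ℝ) {m M : ℤ} (h : m ≤ M) :
    ∑ j ∈ Finset.Icc m M, (φ j - φ (j - 1)) = φ M - φ (m - 1) := by
  have hN : M = m + ((M - m).toNat : ℤ) := by omega
  rw [hN]
  exact sum_Icc_telescope_nat φ m (M - m).toNat

/-- truncation of `t` to the dyadic band `[2^(j-1), 2^j]`. -/
private noncomputable def trunc (j : ℤ) (t : ℝ) : ℝ :=
  min t ((2:ℝ) ^ j) - min t ((2:ℝ) ^ (j - 1))

private lemma trunc_mono {a b : ℝ} (h : b ≤ a) (j : ℤ) : trunc j b ≤ trunc j a := by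
  have h1 : (2:ℝ) ^ (j - 1) ≤ (2:ℝ) ^ j := zpow_le_zpow_right₀ one_le_two (by omega)
  have := minsub_mono h h1
  unfold trunc; linarith

private lemma sum_trunc_sub_le {a b : ℝ} (h : b ≤ a) (T : Finset ℤ) :
    ∑ j ∈ T, (trunc j a - trunc j b) ≤ a - b := by
  rcases T.eq_empty_or_nonempty with rfl | hT
  · simpa using sub_nonneg.2 h
  · set m := T.min' hT with hm
    set M := T.max' hT with hM
    have hmM : m ≤ M := T.min'_le _ (T.max'_mem hT)
    have hsub : T ⊆ Finset.Icc m M := fun j hj =>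
      Finset.mem_Icc.2 ⟨T.min'_le j hj, T.le_max' j hj⟩
    refine le_trans (Finset.sum_le_sum_of_subset_of_nonneg hsub
      (fun j _ _ => by linarith [trunc_mono h j])) ?_
    rw [Finset.sum_sub_distrib]
    have ta := sum_Icc_telescope (fun j => min a ((2:ℝ) ^ j)) hmM
    have tb := sum_Icc_telescope (fun j => min b ((2:ℝ) ^ j)) hmM
    simp only [trunc]
    rw [ta, tb]
    have h1 : min a ((2:ℝ) ^ M) - min b ((2:ℝ) ^ M) ≤ a - b := min_sub_min_le h
    have h2 : min b ((2:ℝ) ^ (m - 1)) ≤ min a ((2:ℝ) ^ (m - 1)) := min_le_min h le_rfl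
    linarith

private lemma sum_abs_trunc_le (a b : ℝ) (T : Finset ℤ) :
    ∑ j ∈ T, |trunc j a - trunc j b| ≤ |a - b| := by
  have key : ∀ a b : ℝ, b ≤ a → ∑ j ∈ T, |trunc j a - trunc j b| ≤ |a - b| := by
    intro a b h
    rw [Finset.sum_congr rfl (fun j _ => abs_of_nonneg (by linarith [trunc_mono h j])),
      abs_of_nonneg (by linarith : (0:ℝ) ≤ a - b)]
    exact sum_trunc_sub_le h T
  rcases le_total b a with h | h
  · exact key a b h
  · rw [abs_sub_comm]
    calc ∑ j ∈ T, |trunc j a - trunc j b| = ∑ j ∈ T, |trunc j b - trunc j a| := by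
          simp only [abs_sub_comm]
      _ ≤ |b - a| := key b a h

private lemma sum_rpow_le {ι : Type*} (T : Finset ι) (x : ι → ℝ) (hx : ∀ j ∈ T, 0 ≤ x j)
    {p : ℝ} (hp : 1 ≤ p) :
    ∑ j ∈ T, x j ^ p ≤ (∑ j ∈ T, x j) ^ p := by
  have hp0 : p ≠ 0 := by linarith
  set S := ∑ j ∈ T, x j with hS
  have hS0 : 0 ≤ S := Finset.sum_nonneg hx
  rcases eq_or_lt_of_le hS0 with h0 | h0
  · have hz : ∀ j ∈ T, x j = 0 := by
      intro j hj
      have h1 := Finset.single_le_sum hx hj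
      have := hx j hj; rw [← hS] at h1; linarith
    rw [Finset.sum_congr rfl (fun j hj => by rw [hz j hj, Real.zero_rpow hp0])]
    simp [Real.rpow_nonneg hS0]
  · have key : ∀ j ∈ T, x j ^ p ≤ S ^ (p - 1) * x j := by
      intro j hj
      rcases eq_or_lt_of_le (hx j hj) with hxj | hxj
      · rw [← hxj, Real.zero_rpow hp0, mul_zero]
      · have hxle : x j ≤ S := Finset.single_le_sum hx hj
        calc x j ^ p = x j ^ (p - 1) * x j := by
              have h2 := Real.rpow_add hxj (p - 1) 1
              have hpp : p - 1 + 1 = p := by ring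
              rw [hpp, Real.rpow_one] at h2
              exact h2
          _ ≤ S ^ (p - 1) * x j :=
              mul_le_mul_of_nonneg_right
                (Real.rpow_le_rpow hxj.le hxle (by linarith)) (hx j hj)
    calc ∑ j ∈ T, x j ^ p ≤ ∑ j ∈ T, S ^ (p - 1) * x j := Finset.sum_le_sum key
      _ = S ^ (p - 1) * S := by rw [← Finset.mul_sum]
      _ = S ^ p := by
          have h2 := Real.rpow_add h0 (p - 1) 1
          have hpp : p - 1 + 1 = p := by ring
          rw [hpp, Real.rpow_one] at h2
          exact h2.symm

private lemma sum_abs_trunc_rpow_le (a b : ℝ) (T : Finset ℤ) {p : ℝ} (hp : 1 ≤ p) :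
    ∑ j ∈ T, |trunc j a - trunc j b| ^ p ≤ |a - b| ^ p := by
  refine le_trans (sum_rpow_le T _ (fun j _ => abs_nonneg _) hp) ?_
  exact Real.rpow_le_rpow (Finset.sum_nonneg fun j _ => abs_nonneg _)
    (sum_abs_trunc_le a b T) (by linarith)

/-! ### Energy lemmas -/

private lemma energy_mono {n : ℕ} {G : Set (EuclideanSpace ℝ (Fin n))} {s p : ℝ} (hp : 0 ≤ p)
    {f g : EuclideanSpace ℝ (Fin n) → ℝ}
    (h : ∀ x y, |g x - g y| ≤ |f x - f y|) :
    fracEnergy G s p g ≤ fracEnergy G s p f := by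
  unfold fracEnergy
  refine lintegral_mono fun x => lintegral_mono fun y => ?_
  apply ENNReal.ofReal_le_ofReal
  have hD0 : (0:ℝ) ≤ dist x y ^ ((n:ℝ) + s * p) := Real.rpow_nonneg dist_nonneg _
  rcases eq_or_lt_of_le hD0 with hD | hD
  · rw [← hD, div_zero, div_zero]
  · exact (div_le_div_iff_of_pos_right hD).mpr (Real.rpow_le_rpow (abs_nonneg _) (h x y) hp)

private lemma energy_const_mul {n : ℕ} {G : Set (EuclideanSpace ℝ (Fin n))} {s p : ℝ}
    (c : ℝ) (hc : 0 ≤ c) (g : EuclideanSpace ℝ (Fin n) → ℝ) :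
    fracEnergy G s p (fun x => c * g x) = ENNReal.ofReal (c ^ p) * fracEnergy G s p g := by
  unfold fracEnergy
  rw [← lintegral_const_mul' _ _ ENNReal.ofReal_ne_top]
  refine lintegral_congr fun x => ?_
  rw [← lintegral_const_mul' _ _ ENNReal.ofReal_ne_top]
  refine lintegral_congr fun y => ?_
  rw [← ENNReal.ofReal_mul (Real.rpow_nonneg hc _)]
  congr 1
  rw [← mul_sub, abs_mul, abs_of_nonneg hc, Real.mul_rpow hc (abs_nonneg _), mul_div_assoc]

/-! ### The hard direction: the Maz'ya condition implies the Hardy inequality -/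

private lemma mazya_to_hardy {n : ℕ} {s p : ℝ} (hs : 0 < s) (hp : 1 < p)
    {G : Set (EuclideanSpace ℝ (Fin n))}
    {C : ℝ} (hC : 0 < C)
    (hM : ∀ K : Set (EuclideanSpace ℝ (Fin n)), IsCompact K → K ⊆ G →
      (∫⁻ x in K, ENNReal.ofReal (Metric.infDist x (frontier G) ^ (-(s * p)))) ≤
        ENNReal.ofReal C * fracCapacity G s p K) :
    AdmitsHardy G s p := by
  have hp0 : (0:ℝ) ≤ p := by linarith
  have hpne : p ≠ 0 := by linarith
  refine ⟨C * 4 ^ p, by positivity, ?_⟩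
  intro f hf hfc hfsupp
  set F : EuclideanSpace ℝ (Fin n) → ℝ := fun x => |f x| with hFdef
  have hF : Continuous F := hf.abs
  have hFc : HasCompactSupport F := hfc.abs
  have hFsupp : tsupport F ⊆ G := by
    have hsupp : Function.support F = Function.support f := by
      ext z; simp [Function.mem_support, hFdef, abs_ne_zero]
    have : tsupport F = tsupport f := by
      unfold tsupport
      rw [hsupp]
    rw [this]; exact hfsupp
  set w : EuclideanSpace ℝ (Fin n) → ℝ≥0∞ :=
    fun x => ENNReal.ofReal (Metric.infDist x (frontier G) ^ (-(s * p))) with hw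
  have hwm : Measurable w :=
    ((continuous_infDist_pt _).measurable.pow measurable_const).ennreal_ofReal
  set g : ℤ → EuclideanSpace ℝ (Fin n) → ℝ := fun j x => trunc j (F x) with hg
  have hgcont : ∀ j, Continuous (g j) :=
    fun j => (hF.min continuous_const).sub (hF.min continuous_const)
  set Ej : ℤ → Set (EuclideanSpace ℝ (Fin n)) := fun j => {x | (2:ℝ) ^ j ≤ F x} with hEj
  have hEclosed : ∀ j, IsClosed (Ej j) := fun j => isClosed_le continuous_const hF
  have hEmeas : ∀ j, MeasurableSet (Ej j) := fun j => (hEclosed j).measurableSet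
  have hEsub : ∀ j, Ej j ⊆ tsupport F := by
    intro j x hx
    have h2 : (0:ℝ) < 2 ^ j := by positivity
    have hx' : (2:ℝ) ^ j ≤ F x := hx
    exact subset_tsupport F (by intro h0; rw [h0] at hx'; linarith)
  have hEcomp : ∀ j, IsCompact (Ej j) :=
    fun j => hFc.of_isClosed_subset (hEclosed j) (hEsub j)
  have hEG : ∀ j, Ej j ⊆ G := fun j => (hEsub j).trans hFsupp
  -- measurability of the energy kernel
  have hker : ∀ h : EuclideanSpace ℝ (Fin n) → ℝ, Continuous h →
      Measurable (Function.uncurry fun x y =>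
        ENNReal.ofReal (|h x - h y| ^ p / dist x y ^ ((n:ℝ) + s * p))) := by
    intro h hh
    apply Measurable.ennreal_ofReal
    apply Measurable.div
    · exact ((((hh.comp continuous_fst).sub (hh.comp continuous_snd)).abs).measurable).pow
        measurable_const
    · exact (continuous_dist.measurable).pow measurable_const
  -- Step A: dyadic decomposition of the left-hand side
  have stepA : (∫⁻ x in G,
        ENNReal.ofReal (|f x| ^ p * Metric.infDist x (frontier G) ^ (-(s * p))))
      ≤ ∑' j : ℤ, ENNReal.ofReal (((2:ℝ) ^ (j + 1)) ^ p) * ∫⁻ x in Ej j, w x := by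
    set A : ℤ → Set (EuclideanSpace ℝ (Fin n)) := fun j => Ej j \ Ej (j + 1) with hA
    have hAmeas : ∀ j, MeasurableSet (A j) := fun j => (hEmeas j).diff (hEmeas (j + 1))
    have hpt : ∀ x, ENNReal.ofReal (|f x| ^ p * Metric.infDist x (frontier G) ^ (-(s * p)))
        ≤ ∑' j : ℤ,
            (A j).indicator (fun _ => ENNReal.ofReal (((2:ℝ) ^ (j + 1)) ^ p)) x * w x := by
      intro x
      rcases eq_or_lt_of_le (abs_nonneg (f x)) with h0 | h0
      · rw [← h0, Real.zero_rpow hpne, zero_mul, ENNReal.ofReal_zero]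
        exact zero_le
      · obtain ⟨j, hj1, hj2⟩ := exists_mem_Ico_zpow h0 one_lt_two
        have hxA : x ∈ A j := ⟨hj1, fun hc => absurd hj2 (not_lt.2 hc)⟩
        calc ENNReal.ofReal (|f x| ^ p * Metric.infDist x (frontier G) ^ (-(s * p)))
            = ENNReal.ofReal (|f x| ^ p) * w x :=
              ENNReal.ofReal_mul (Real.rpow_nonneg (abs_nonneg _) p)
          _ ≤ ENNReal.ofReal (((2:ℝ) ^ (j + 1)) ^ p) * w x := by
              exact mul_le_mul_left
                (ENNReal.ofReal_le_ofReal
                  (Real.rpow_le_rpow (abs_nonneg _) hj2.le hp0)) _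
          _ = (A j).indicator (fun _ => ENNReal.ofReal (((2:ℝ) ^ (j + 1)) ^ p)) x * w x := by
              rw [Set.indicator_of_mem hxA]
          _ ≤ ∑' j : ℤ,
              (A j).indicator (fun _ => ENNReal.ofReal (((2:ℝ) ^ (j + 1)) ^ p)) x * w x :=
              ENNReal.le_tsum j
    calc (∫⁻ x in G,
          ENNReal.ofReal (|f x| ^ p * Metric.infDist x (frontier G) ^ (-(s * p))))
        ≤ ∫⁻ x in G, ∑' j : ℤ,
            (A j).indicator (fun _ => ENNReal.ofReal (((2:ℝ) ^ (j + 1)) ^ p)) x * w x :=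
          lintegral_mono hpt
      _ = ∑' j : ℤ, ∫⁻ x in G,
            (A j).indicator (fun _ => ENNReal.ofReal (((2:ℝ) ^ (j + 1)) ^ p)) x * w x :=
          lintegral_tsum fun j =>
            ((measurable_const.indicator (hAmeas j)).mul hwm).aemeasurable
      _ ≤ ∑' j : ℤ, ENNReal.ofReal (((2:ℝ) ^ (j + 1)) ^ p) * ∫⁻ x in Ej j, w x := by
          refine ENNReal.tsum_le_tsum fun j => ?_
          have hrw : ∀ x,
              (A j).indicator (fun _ => ENNReal.ofReal (((2:ℝ) ^ (j + 1)) ^ p)) x * w x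
              = (A j).indicator
                  (fun x => ENNReal.ofReal (((2:ℝ) ^ (j + 1)) ^ p) * w x) x := fun x =>
            (Set.indicator_mul_left _ _ _).symm
          rw [lintegral_congr hrw, lintegral_indicator (hAmeas j),
            Measure.restrict_restrict (hAmeas j)]
          refine le_trans
            (lintegral_mono_set (le_trans Set.inter_subset_left Set.diff_subset)) ?_
          rw [lintegral_const_mul' _ _ ENNReal.ofReal_ne_top]
  -- Steps B, C, D: capacity bound and truncation
  have stepBCD : ∀ j : ℤ, (∫⁻ x in Ej j, w x)
      ≤ ENNReal.ofReal C *
          (ENNReal.ofReal (((2:ℝ) ^ (1 - j)) ^ p) * fracEnergy G s p (g j)) := by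
    intro j
    refine le_trans (hM (Ej j) (hEcomp j) (hEG j)) (mul_le_mul_right ?_ _)
    set c : ℝ := (2:ℝ) ^ (1 - j) with hc
    have hc0 : (0:ℝ) < c := by positivity
    set u : EuclideanSpace ℝ (Fin n) → ℝ := fun x => c * g j x with hu
    have hu1 : Continuous u := continuous_const.mul (hgcont j)
    have hsupp_sub : Function.support u ⊆ Function.support F := by
      intro x hx
      simp only [Function.mem_support] at hx ⊢
      intro hFx
      apply hx
      have hz : g j x = 0 := by
        simp only [hg, trunc, hFx]
        rw [min_eq_left (le_of_lt (by positivity : (0:ℝ) < 2 ^ j)),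
          min_eq_left (le_of_lt (by positivity : (0:ℝ) < 2 ^ (j - 1)))]
        ring
      rw [hu]
      simp [hz]
    have hu2 : HasCompactSupport u := hFc.mono hsupp_sub
    have hu3 : tsupport u ⊆ G := (closure_mono hsupp_sub).trans hFsupp
    have hu4 : ∀ x ∈ Ej j, 1 ≤ u x := by
      intro x hx
      have hx' : (2:ℝ) ^ j ≤ F x := hx
      have h1 : min (F x) ((2:ℝ) ^ j) = (2:ℝ) ^ j := min_eq_right hx'
      have h2 : min (F x) ((2:ℝ) ^ (j - 1)) = (2:ℝ) ^ (j - 1) :=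
        min_eq_right (le_trans (zpow_le_zpow_right₀ one_le_two (by omega)) hx')
      have heq : u x = c * ((2:ℝ) ^ j - (2:ℝ) ^ (j - 1)) := by
        rw [hu]; simp only [hg, trunc, h1, h2]
      have h3 : (2:ℝ) ^ j = 2 * (2:ℝ) ^ (j - 1) := by
        rw [zpow_sub_one₀ (two_ne_zero (α := ℝ))]
        field_simp
      have h4 : c * (2:ℝ) ^ (j - 1) = 1 := by
        have h5 : (1 - j) + (j - 1) = 0 := by ring
        rw [hc, ← zpow_add₀ (two_ne_zero (α := ℝ)), h5, zpow_zero]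
      rw [heq, h3]
      nlinarith [h4]
    have hcap : fracCapacity G s p (Ej j) ≤ fracEnergy G s p u :=
      iInf_le (fun u : {u : EuclideanSpace ℝ (Fin n) → ℝ //
          Continuous u ∧ HasCompactSupport u ∧ tsupport u ⊆ G ∧ ∀ x ∈ Ej j, 1 ≤ u x} =>
        fracEnergy G s p u) ⟨u, hu1, hu2, hu3, hu4⟩
    refine hcap.trans ?_
    rw [hu]
    rw [energy_const_mul c hc0.le (g j)]
  -- Step E: the truncation energies sum up to at most the energy of f
  have stepE : ∑' j : ℤ, fracEnergy G s p (g j) ≤ fracEnergy G s p f := by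
    have hEF : fracEnergy G s p F ≤ fracEnergy G s p f :=
      energy_mono hp0 fun x y => abs_abs_sub_abs_le_abs_sub (f x) (f y)
    refine le_trans ?_ hEF
    rw [ENNReal.tsum_eq_iSup_sum]
    refine iSup_le fun T => ?_
    have h1 : ∀ j ∈ T, Measurable fun x => ∫⁻ y in G,
        ENNReal.ofReal (|g j x - g j y| ^ p / dist x y ^ ((n:ℝ) + s * p)) :=
      fun j _ => (hker (g j) (hgcont j)).lintegral_prod_right
    have h2 : ∀ (j : ℤ) (x : EuclideanSpace ℝ (Fin n)), Measurable fun y =>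
        ENNReal.ofReal (|g j x - g j y| ^ p / dist x y ^ ((n:ℝ) + s * p)) := by
      intro j x
      apply Measurable.ennreal_ofReal
      exact (((continuous_const.sub (hgcont j)).abs.measurable).pow measurable_const).div
        (((continuous_const.dist continuous_id)).measurable.pow measurable_const)
    have key : ∀ x y, ∑ j ∈ T,
        ENNReal.ofReal (|g j x - g j y| ^ p / dist x y ^ ((n:ℝ) + s * p))
        ≤ ENNReal.ofReal (|F x - F y| ^ p / dist x y ^ ((n:ℝ) + s * p)) := by
      intro x y
      have hD0 : (0:ℝ) ≤ dist x y ^ ((n:ℝ) + s * p) := Real.rpow_nonneg dist_nonneg _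
      rw [← ENNReal.ofReal_sum_of_nonneg
        (fun j _ => div_nonneg (Real.rpow_nonneg (abs_nonneg _) _) hD0)]
      apply ENNReal.ofReal_le_ofReal
      rw [← Finset.sum_div]
      rcases eq_or_lt_of_le hD0 with hD | hD
      · rw [← hD, div_zero, div_zero]
      · exact (div_le_div_iff_of_pos_right hD).mpr (sum_abs_trunc_rpow_le (F x) (F y) T hp.le)
    calc ∑ j ∈ T, fracEnergy G s p (g j)
        = ∫⁻ x in G, ∑ j ∈ T, ∫⁻ y in G,
            ENNReal.ofReal (|g j x - g j y| ^ p / dist x y ^ ((n:ℝ) + s * p)) :=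
          (lintegral_finset_sum T h1).symm
      _ = ∫⁻ x in G, ∫⁻ y in G, ∑ j ∈ T,
            ENNReal.ofReal (|g j x - g j y| ^ p / dist x y ^ ((n:ℝ) + s * p)) :=
          lintegral_congr fun x => (lintegral_finset_sum T fun j _ => h2 j x).symm
      _ ≤ ∫⁻ x in G, ∫⁻ y in G,
            ENNReal.ofReal (|F x - F y| ^ p / dist x y ^ ((n:ℝ) + s * p)) :=
          lintegral_mono fun x => lintegral_mono fun y => key x y
      _ = fracEnergy G s p F := rfl
  -- Combine everything
  have hcb : ∀ j : ℤ, ENNReal.ofReal (((2:ℝ) ^ (j + 1)) ^ p) *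
      ENNReal.ofReal (((2:ℝ) ^ (1 - j)) ^ p) = ENNReal.ofReal ((4:ℝ) ^ p) := by
    intro j
    rw [← ENNReal.ofReal_mul (Real.rpow_nonneg (by positivity) _),
      ← Real.mul_rpow (by positivity) (by positivity)]
    congr 2
    rw [← zpow_add₀ (two_ne_zero (α := ℝ))]
    have h5 : (j + 1) + (1 - j) = 2 := by ring
    rw [h5]
    norm_num
  calc (∫⁻ x in G,
        ENNReal.ofReal (|f x| ^ p * Metric.infDist x (frontier G) ^ (-(s * p))))
      ≤ ∑' j : ℤ, ENNReal.ofReal (((2:ℝ) ^ (j + 1)) ^ p) * ∫⁻ x in Ej j, w x := stepA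
    _ ≤ ∑' j : ℤ, ENNReal.ofReal (((2:ℝ) ^ (j + 1)) ^ p) *
          (ENNReal.ofReal C *
            (ENNReal.ofReal (((2:ℝ) ^ (1 - j)) ^ p) * fracEnergy G s p (g j))) :=
        ENNReal.tsum_le_tsum fun j => mul_le_mul_right (stepBCD j) _
    _ = ∑' j : ℤ, ENNReal.ofReal (C * 4 ^ p) * fracEnergy G s p (g j) := by
        refine tsum_congr fun j => ?_
        calc ENNReal.ofReal (((2:ℝ) ^ (j + 1)) ^ p) *
              (ENNReal.ofReal C *
                (ENNReal.ofReal (((2:ℝ) ^ (1 - j)) ^ p) * fracEnergy G s p (g j)))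
            = (ENNReal.ofReal (((2:ℝ) ^ (j + 1)) ^ p) *
                ENNReal.ofReal (((2:ℝ) ^ (1 - j)) ^ p)) *
              (ENNReal.ofReal C * fracEnergy G s p (g j)) := by ring
          _ = ENNReal.ofReal ((4:ℝ) ^ p) * (ENNReal.ofReal C * fracEnergy G s p (g j)) := by
              rw [hcb j]
          _ = ENNReal.ofReal (C * 4 ^ p) * fracEnergy G s p (g j) := by
              rw [ENNReal.ofReal_mul hC.le]; ring
    _ = ENNReal.ofReal (C * 4 ^ p) * ∑' j : ℤ, fracEnergy G s p (g j) :=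
        ENNReal.tsum_mul_left
    _ ≤ ENNReal.ofReal (C * 4 ^ p) * fracEnergy G s p f := mul_le_mul_right stepE _

/-- **Theorem 4.2 (Maz'ya-type characterization).** Let `0 < s < 1` and `1 < p < ∞`.
An open set `∅ ≠ G ⊊ ℝⁿ` admits an `(s,p)`-Hardy inequality if and only if there is `C > 0`
such that `∫_K dist(x,∂G)^{-sp} dx ≤ C ⋅ cap_{s,p}(K,G)` for every compact `K ⊆ G`. -/
theorem hardy_iff_mazya (n : ℕ) (s p : ℝ) (hs : 0 < s) (hs1 : s < 1) (hp : 1 < p)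
    (G : Set (EuclideanSpace ℝ (Fin n))) (hG : IsOpen G) (hne : G.Nonempty)
    (hGuniv : G ≠ Set.univ) :
    AdmitsHardy G s p ↔
      ∃ C : ℝ, 0 < C ∧
        ∀ K : Set (EuclideanSpace ℝ (Fin n)), IsCompact K → K ⊆ G →
          (∫⁻ x in K, ENNReal.ofReal (Metric.infDist x (frontier G) ^ (-(s * p)))) ≤
            ENNReal.ofReal C * fracCapacity G s p K := by
  constructor
  · rintro ⟨C, hC, hH⟩
    refine ⟨C, hC, ?_⟩
    intro K hK hKG
    by_cases hne2 : Nonempty {u : EuclideanSpace ℝ (Fin n) → ℝ //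
        Continuous u ∧ HasCompactSupport u ∧ tsupport u ⊆ G ∧ ∀ x ∈ K, 1 ≤ u x}
    · rw [fracCapacity, ENNReal.mul_iInf (fun h => absurd h ENNReal.ofReal_ne_top)]
      refine le_iInf ?_
      rintro ⟨u, hu1, hu2, hu3, hu4⟩
      have hmeas : Measurable fun x =>
          ENNReal.ofReal (|u x| ^ p * Metric.infDist x (frontier G) ^ (-(s * p))) :=
        ((hu1.abs.measurable.pow measurable_const).mul
          ((continuous_infDist_pt _).measurable.pow measurable_const)).ennreal_ofReal
      have hpt : ∀ x ∈ K,
          ENNReal.ofReal (Metric.infDist x (frontier G) ^ (-(s * p)))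
          ≤ ENNReal.ofReal (|u x| ^ p * Metric.infDist x (frontier G) ^ (-(s * p))) := by
        intro x hx
        apply ENNReal.ofReal_le_ofReal
        have h1 : (1:ℝ) ≤ |u x| := le_trans (hu4 x hx) (le_abs_self _)
        have h2 : (1:ℝ) ≤ |u x| ^ p := Real.one_le_rpow h1 (by linarith)
        have h3 : (0:ℝ) ≤ Metric.infDist x (frontier G) ^ (-(s * p)) :=
          Real.rpow_nonneg Metric.infDist_nonneg _
        nlinarith
      calc (∫⁻ x in K, ENNReal.ofReal (Metric.infDist x (frontier G) ^ (-(s * p))))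
          ≤ ∫⁻ x in K,
              ENNReal.ofReal (|u x| ^ p * Metric.infDist x (frontier G) ^ (-(s * p))) :=
            setLIntegral_mono hmeas hpt
        _ ≤ ∫⁻ x in G,
              ENNReal.ofReal (|u x| ^ p * Metric.infDist x (frontier G) ^ (-(s * p))) :=
            lintegral_mono_set hKG
        _ ≤ ENNReal.ofReal C * fracEnergy G s p u := hH u hu1 hu2 hu3
    · rw [fracCapacity]
      haveI : IsEmpty {u : EuclideanSpace ℝ (Fin n) → ℝ //
          Continuous u ∧ HasCompactSupport u ∧ tsupport u ⊆ G ∧ ∀ x ∈ K, 1 ≤ u x} :=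
        not_nonempty_iff.mp hne2
      rw [iInf_of_empty, ENNReal.mul_top (ENNReal.ofReal_pos.mpr hC).ne']
      exact le_top
  · rintro ⟨C, hC, hM⟩
    exact mazya_to_hardy hs hp hC hM
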